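/- For every finite simple graph Λ there exists a finite simple graph Γ such that BB(Γ) is isomorphic to A(Λ); that is, every right-angled Artin group arises as a Bestvina–Brady group. -/

import Mathlib

def raagRels {V : Type} (G : SimpleGraph V) : Set (FreeGroup V) :=
  {r | ∃ v w : V, G.Adj v w ∧
    r = FreeGroup.of v * FreeGroup.of w * (FreeGroup.of v)⁻¹ * (FreeGroup.of w)⁻¹}

/-- The right-angled Artin group of a simple graph. -/
abbrev RAAG {V : Type} (G : SimpleGraph V) : Type := PresentedGroup (raagRels G)

/-- The canonical generator of `RAAG G` corresponding to a vertex. -/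
def raagGen {V : Type} (G : SimpleGraph V) (v : V) : RAAG G :=
  PresentedGroup.of (rels := raagRels G) v

/-- The homomorphism `A(Γ) → ℤ` sending every vertex generator to `1`. -/
def bbgChar {V : Type} (G : SimpleGraph V) : RAAG G →* Multiplicative ℤ :=
  PresentedGroup.toGroup (f := fun _ : V => Multiplicative.ofAdd (1 : ℤ)) (by
    rintro r ⟨v, w, -, rfl⟩
    simp only [map_mul, map_inv, FreeGroup.lift_apply_of]
    group)

/-- The Bestvina–Brady group of a simple graph, as a subgroup of the RAAG. -/
def BBG {V : Type} (G : SimpleGraph V) : Subgroup (RAAG G) := (bbgChar G).ker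

/- --------- auxiliary material --------- -/

theorem raagGen_comm {V : Type} {G : SimpleGraph V} {v w : V} (h : G.Adj v w) :
    raagGen G v * raagGen G w = raagGen G w * raagGen G v := by
  have hr : (FreeGroup.of v * FreeGroup.of w * (FreeGroup.of v)⁻¹ * (FreeGroup.of w)⁻¹ :
      FreeGroup V) ∈ Subgroup.normalClosure (raagRels G) :=
    Subgroup.subset_normalClosure ⟨v, w, h, rfl⟩
  have h1 : (PresentedGroup.mk (raagRels G))
      (FreeGroup.of v * FreeGroup.of w * (FreeGroup.of v)⁻¹ * (FreeGroup.of w)⁻¹) = 1 :=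
    (QuotientGroup.eq_one_iff _).2 hr
  simp only [map_mul, map_inv] at h1
  exact commutatorElement_eq_one_iff_mul_comm.1 (by rw [commutatorElement_def]; exact h1)

@[simp] theorem bbgChar_gen {V : Type} (G : SimpleGraph V) (v : V) :
    bbgChar G (raagGen G v) = Multiplicative.ofAdd (1 : ℤ) :=
  PresentedGroup.toGroup.of _

/-- The cone graph over `Λ`: vertex set `Option V`, with `none` joined to everything. -/
def coneGraph {V : Type} (Λ : SimpleGraph V) : SimpleGraph (Option V) where
  Adj a b := (∃ v w : V, a = some v ∧ b = some w ∧ Λ.Adj v w) ∨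
    (a = none ∧ b ≠ none) ∨ (b = none ∧ a ≠ none)
  symm := by
    constructor
    rintro a b (⟨v, w, rfl, rfl, h⟩ | ⟨rfl, h⟩ | ⟨rfl, h⟩)
    · exact Or.inl ⟨w, v, rfl, rfl, h.symm⟩
    · exact Or.inr (Or.inr ⟨rfl, h⟩)
    · exact Or.inr (Or.inl ⟨rfl, h⟩)
  loopless := by
    constructor
    rintro a (⟨v, w, rfl, h1, h2⟩ | ⟨rfl, h⟩ | ⟨rfl, h⟩)
    · exact h2.ne (Option.some_injective _ h1)
    · exact h rfl
    · exact h rfl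

theorem coneGraph_adj_some {V : Type} (Λ : SimpleGraph V) {v w : V} (h : Λ.Adj v w) :
    (coneGraph Λ).Adj (some v) (some w) := Or.inl ⟨v, w, rfl, rfl, h⟩

theorem coneGraph_adj_none {V : Type} (Λ : SimpleGraph V) (v : V) :
    (coneGraph Λ).Adj none (some v) := Or.inr (Or.inl ⟨rfl, by simp⟩)

section Cone

variable {V : Type} (Λ : SimpleGraph V)

/-- The cone generator is central. -/
theorem cone_t_commute (x : RAAG (coneGraph Λ)) :
    Commute (raagGen (coneGraph Λ) none) x := by
  have hx := PresentedGroup.generated_by _ (Subgroup.centralizer {raagGen (coneGraph Λ) none})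
    (fun j => Subgroup.mem_centralizer_iff.2 (by
      rintro g rfl
      cases j with
      | none => rfl
      | some v => exact raagGen_comm (coneGraph_adj_none Λ v))) x
  exact Subgroup.mem_centralizer_iff.1 hx _ rfl

/-- The homomorphism `A(Λ) → A(coneΛ)`, `v ↦ v t⁻¹`. -/
def coneF : RAAG Λ →* RAAG (coneGraph Λ) :=
  PresentedGroup.toGroup
    (f := fun v : V => raagGen (coneGraph Λ) (some v) * (raagGen (coneGraph Λ) none)⁻¹) (by
    rintro r ⟨v, w, hvw, rfl⟩
    simp only [map_mul, map_inv, FreeGroup.lift_apply_of]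
    set t := raagGen (coneGraph Λ) none
    set x := raagGen (coneGraph Λ) (some v)
    set y := raagGen (coneGraph Λ) (some w)
    have hxy : x * y = y * x := raagGen_comm (coneGraph_adj_some Λ hvw)
    have htx : Commute t⁻¹ x := ((cone_t_commute Λ x).inv_left)
    have hty : Commute t⁻¹ y := ((cone_t_commute Λ y).inv_left)
    have hcomm : x * t⁻¹ * (y * t⁻¹) = y * t⁻¹ * (x * t⁻¹) := by
      simp only [mul_assoc]
      rw [← mul_assoc t⁻¹ y, hty.eq, ← mul_assoc t⁻¹ x, htx.eq]
      simp only [mul_assoc]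
      rw [← mul_assoc x y, hxy, mul_assoc]
    exact commutatorElement_eq_one_iff_mul_comm.2 hcomm)

@[simp] theorem coneF_gen (v : V) :
    coneF Λ (raagGen Λ v) =
      raagGen (coneGraph Λ) (some v) * (raagGen (coneGraph Λ) none)⁻¹ :=
  PresentedGroup.toGroup.of _

/-- The homomorphism `A(coneΛ) → A(Λ)` killing the cone vertex. -/
def coneG : RAAG (coneGraph Λ) →* RAAG Λ :=
  PresentedGroup.toGroup (f := fun a : Option V => Option.elim a 1 (raagGen Λ)) (by
    rintro r ⟨a, b, hab, rfl⟩
    simp only [map_mul, map_inv, FreeGroup.lift_apply_of]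
    rcases hab with ⟨v, w, rfl, rfl, h⟩ | ⟨rfl, -⟩ | ⟨rfl, -⟩
    · exact commutatorElement_eq_one_iff_mul_comm.2 (raagGen_comm h)
    · simp
    · simp)

@[simp] theorem coneG_gen_some (v : V) :
    coneG Λ (raagGen (coneGraph Λ) (some v)) = raagGen Λ v :=
  PresentedGroup.toGroup.of _

@[simp] theorem coneG_gen_none :
    coneG Λ (raagGen (coneGraph Λ) none) = 1 :=
  PresentedGroup.toGroup.of _

theorem coneG_coneF (a : RAAG Λ) : coneG Λ (coneF Λ a) = a := by
  have : (coneG Λ).comp (coneF Λ) = MonoidHom.id _ := by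
    ext v
    show coneG Λ (coneF Λ (raagGen Λ v)) = raagGen Λ v
    simp
  exact congrArg (fun φ => φ a) this

theorem coneF_mem_ker (a : RAAG Λ) : coneF Λ a ∈ BBG (coneGraph Λ) := by
  have : (bbgChar (coneGraph Λ)).comp (coneF Λ) = 1 := by
    ext v
    show bbgChar (coneGraph Λ) (coneF Λ (raagGen Λ v)) = 1
    simp
  show bbgChar (coneGraph Λ) (coneF Λ a) = 1
  exact congrArg (fun φ => φ a) this

/-- The correction homomorphism `x ↦ x * t ^ (-χ x)`. -/
def conePsi : RAAG (coneGraph Λ) →* RAAG (coneGraph Λ) where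
  toFun x := x * (raagGen (coneGraph Λ) none) ^ (-(bbgChar (coneGraph Λ) x).toAdd)
  map_one' := by simp
  map_mul' x y := by
    have hc : Commute ((raagGen (coneGraph Λ) none) ^ (-(bbgChar (coneGraph Λ) x).toAdd)) y :=
      ((cone_t_commute Λ y).zpow_left _)
    simp only [map_mul, toAdd_mul, neg_add, zpow_add]
    conv_rhs => rw [mul_assoc x, ← mul_assoc _ y, hc.eq, mul_assoc y, ← mul_assoc x y]

theorem coneF_coneG (x : RAAG (coneGraph Λ)) :
    coneF Λ (coneG Λ x) =
      x * (raagGen (coneGraph Λ) none) ^ (-(bbgChar (coneGraph Λ) x).toAdd) := by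
  have : (coneF Λ).comp (coneG Λ) = conePsi Λ := by
    ext a
    show coneF Λ (coneG Λ (raagGen (coneGraph Λ) a)) = conePsi Λ (raagGen (coneGraph Λ) a)
    cases a with
    | none => simp [conePsi]
    | some v => simp [conePsi, zpow_neg]
  exact congrArg (fun φ => φ x) this

end Cone

/-- Every RAAG arises as a Bestvina–Brady group. -/
theorem stmt_4 {V : Type} [Fintype V] (Λ : SimpleGraph V) :
    ∃ (W : Type) (_ : Fintype W) (Γ : SimpleGraph W),
      Nonempty (↥(BBG Γ) ≃* RAAG Λ) := by
  refine ⟨Option V, inferInstance, coneGraph Λ, ⟨?_⟩⟩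
  exact
    { toFun := fun x => coneG Λ x.1
      invFun := fun a => ⟨coneF Λ a, coneF_mem_ker Λ a⟩
      left_inv := by
        rintro ⟨x, hx⟩
        have hx' : bbgChar (coneGraph Λ) x = 1 := hx
        ext
        show coneF Λ (coneG Λ x) = x
        rw [coneF_coneG, hx']
        simp
      right_inv := fun a => coneG_coneF Λ a
      map_mul' := fun x y => by simp [map_mul] }
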